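/- Let k be an algebraically closed field with char k ≠ 2, and let q, q' ∈ k. There is a graded isomorphism R(q) ≅ R(q') if and only if q = q'. Moreover, for every q ∈ k, the three algebras R(q), R₀, and R₁ are pairwise non-isomorphic as graded algebras (no graded isomorphism exists between any two distinct ones). -/

import Mathlib

noncomputable section

/-- The free algebra on three generators `x, y, z` (indexed by `Fin 3`). -/
abbrev F3 (k : Type) [Field k] : Type := FreeAlgebra k (Fin 3)

noncomputable def X (k : Type) [Field k] : F3 k := FreeAlgebra.ι k 0
noncomputable def Y (k : Type) [Field k] : F3 k := FreeAlgebra.ι k 1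
noncomputable def Z (k : Type) [Field k] : F3 k := FreeAlgebra.ι k 2

/-- The quotient of the free algebra on `x, y, z` by the two-sided ideal
generated by the set `rels`. -/
abbrev quotAlg (k : Type) [Field k] (rels : Set (F3 k)) : Type :=
  RingQuot (fun a b : F3 k => a ∈ rels ∧ b = 0)

/-- The image of the `i`-th generator in the quotient algebra. -/
noncomputable def gen (k : Type) [Field k] (rels : Set (F3 k)) (i : Fin 3) :
    quotAlg k rels :=
  RingQuot.mkAlgHom k (fun a b : F3 k => a ∈ rels ∧ b = 0) (FreeAlgebra.ι k i)

/-- The `k`-linear span of the images of the generators in the quotient. -/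
noncomputable def genSpan (k : Type) [Field k] (rels : Set (F3 k)) :
    Submodule k (quotAlg k rels) :=
  Submodule.span k (Set.range (gen k rels))

/-- There is a graded isomorphism between the two quotient algebras:
a `k`-algebra isomorphism carrying the span of the generators onto the
span of the generators. -/
def GradedIso (k : Type) [Field k] (r1 r2 : Set (F3 k)) : Prop :=
  ∃ φ : quotAlg k r1 ≃ₐ[k] quotAlg k r2,
    Submodule.map φ.toLinearMap (genSpan k r1) = genSpan k r2

/-- Relations of `R(q) = k⟨x,y,z⟩/⟨xy − yx, zy, q·zx − xz − z²⟩`. -/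
noncomputable def Rrel (k : Type) [Field k] (q : k) : Set (F3 k) :=
  {X k * Y k - Y k * X k, Z k * Y k, q • (Z k * X k) - X k * Z k - Z k ^ 2}

/-- Relations of `R₀ = k⟨x,y,z⟩/⟨xy − yx, zy, zx − z²⟩`. -/
noncomputable def R0rel (k : Type) [Field k] : Set (F3 k) :=
  {X k * Y k - Y k * X k, Z k * Y k, Z k * X k - Z k ^ 2}

/-- Relations of `R₁ = k⟨x,y,z⟩/⟨xy − yx, zy, zx − yz − z²⟩`. -/
noncomputable def R1rel (k : Type) [Field k] : Set (F3 k) :=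
  {X k * Y k - Y k * X k, Z k * Y k, Z k * X k - Y k * Z k - Z k ^ 2}

section Aux
set_option synthInstance.maxHeartbeats 400000
set_option maxHeartbeats 1000000

variable (k : Type) [Field k]

/-! ### Infrastructure -/

variable (k : Type) [Field k]

/-- The quadratic element of the free algebra with coefficient matrix `c`. -/
noncomputable def quad (c : Matrix (Fin 3) (Fin 3) k) : F3 k :=
  ∑ i, ∑ j, c i j • (FreeAlgebra.ι k i * FreeAlgebra.ι k j)

/-- Relation space spanned by a triple of coefficient matrices. -/
noncomputable def Rsp (M : Fin 3 → Matrix (Fin 3) (Fin 3) k) :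
    Submodule k (Matrix (Fin 3) (Fin 3) k) :=
  Submodule.span k (Set.range M)

/-- Truncated degree-≤2 module. -/
abbrev Amod (M : Fin 3 → Matrix (Fin 3) (Fin 3) k) : Type :=
  k × (Fin 3 → k) × (Matrix (Fin 3) (Fin 3) k ⧸ Rsp k M)

/-- Left multiplication by a degree-one vector `v` on the truncated module. -/
noncomputable def Lop (M : Fin 3 → Matrix (Fin 3) (Fin 3) k) (v : Fin 3 → k) :
    Amod k M →ₗ[k] Amod k M where
  toFun p := (0, p.1 • v, (Rsp k M).mkQ (Matrix.vecMulVec v p.2.1))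
  map_add' p q := by
    have h : Matrix.vecMulVec v (p.2.1 + q.2.1)
        = Matrix.vecMulVec v p.2.1 + Matrix.vecMulVec v q.2.1 := by
      ext i j; simp [Matrix.vecMulVec_apply, mul_add]
    refine Prod.ext (by simp) (Prod.ext (by ext i; simp [add_smul, add_mul]) ?_)
    simp [h, map_add]
  map_smul' a p := by
    have h : Matrix.vecMulVec v (a • p.2.1) = a • Matrix.vecMulVec v p.2.1 := by
      ext i j; simp [Matrix.vecMulVec_apply, mul_comm, mul_left_comm]
    refine Prod.ext (by simp) (Prod.ext (by ext i; simp [smul_smul, mul_assoc]) ?_)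
    simp [h, map_smul]

lemma sum_vecMulVec_single (c : Matrix (Fin 3) (Fin 3) k) :
    ∑ i, ∑ j, c i j • Matrix.vecMulVec (Pi.single i (1:k)) (Pi.single j 1) = c := by
  ext a b
  simp [Matrix.sum_apply, Matrix.vecMulVec_apply, Pi.single_apply, mul_ite, ite_mul,
    Finset.sum_ite_eq']

lemma sumLop_apply (M : Fin 3 → Matrix (Fin 3) (Fin 3) k)
    (c : Matrix (Fin 3) (Fin 3) k) (p : Amod k M) :
    (∑ i, ∑ j, c i j • (Lop k M (Pi.single i 1) ∘ₗ Lop k M (Pi.single j 1))) p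
      = (0, 0, p.1 • (Rsp k M).mkQ c) := by
  have h1 : ∀ i j : Fin 3, (Lop k M (Pi.single i 1) ∘ₗ Lop k M (Pi.single j 1)) p
      = (0, 0, p.1 • (Rsp k M).mkQ (Matrix.vecMulVec (Pi.single i 1) (Pi.single j 1))) := by
    intro i j
    have hv : Matrix.vecMulVec (Pi.single i (1:k)) (p.1 • (Pi.single j 1 : Fin 3 → k))
        = p.1 • Matrix.vecMulVec (Pi.single i 1) (Pi.single j 1) := by
      ext a b; simp [Matrix.vecMulVec_apply, mul_comm, mul_left_comm]
    simp only [LinearMap.comp_apply, Lop, LinearMap.coe_mk, AddHom.coe_mk]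
    simp [hv, map_smul]
  have h2 : (Rsp k M).mkQ c = ∑ i, ∑ j, c i j •
      (Rsp k M).mkQ (Matrix.vecMulVec (Pi.single i 1) (Pi.single j 1)) := by
    conv_lhs => rw [← sum_vecMulVec_single k c]
    simp [map_sum, map_smul]
  simp only [LinearMap.sum_apply, LinearMap.smul_apply, h1, h2]
  refine Prod.ext ?_ (Prod.ext ?_ ?_)
  · simp [Prod.fst_sum, Prod.smul_mk]
  · simp [Prod.fst_sum, Prod.snd_sum, Prod.smul_mk]
  · simp only [Prod.snd_sum, Prod.smul_mk, Finset.smul_sum]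
    refine Finset.sum_congr rfl fun i _ => Finset.sum_congr rfl fun j _ => ?_
    rw [smul_comm]

noncomputable def rho0 (M : Fin 3 → Matrix (Fin 3) (Fin 3) k) :
    F3 k →ₐ[k] Module.End k (Amod k M) :=
  FreeAlgebra.lift k fun i => Lop k M (Pi.single i 1)

noncomputable def quadL : Matrix (Fin 3) (Fin 3) k →ₗ[k] F3 k where
  toFun c := ∑ i, ∑ j, c i j • (FreeAlgebra.ι k i * FreeAlgebra.ι k j)
  map_add' c d := by simp [add_smul, Finset.sum_add_distrib]
  map_smul' a c := by simp [Matrix.smul_apply, mul_smul, Finset.smul_sum]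

lemma quad_eq (c : Matrix (Fin 3) (Fin 3) k) : quad k c = quadL k c := rfl

lemma rho0_quadL (M : Fin 3 → Matrix (Fin 3) (Fin 3) k) (c : Matrix (Fin 3) (Fin 3) k) :
    rho0 k M (quadL k c) = ∑ i, ∑ j, c i j •
      (Lop k M (Pi.single i 1) ∘ₗ Lop k M (Pi.single j 1)) := by
  simp only [quadL, LinearMap.coe_mk, AddHom.coe_mk, map_sum, map_smul, map_mul, rho0,
    FreeAlgebra.lift_ι_apply]
  rfl

lemma rho0_quad_zero (M : Fin 3 → Matrix (Fin 3) (Fin 3) k) (c : Matrix (Fin 3) (Fin 3) k)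
    (hc : c ∈ Rsp k M) : rho0 k M (quad k c) = 0 := by
  rw [quad_eq, rho0_quadL]
  apply LinearMap.ext
  intro p
  rw [sumLop_apply]
  have : (Rsp k M).mkQ c = 0 := (Submodule.Quotient.mk_eq_zero _).mpr hc
  simp [this]

/-- The set of the three quadratic relators. -/
def tripleSet (M : Fin 3 → Matrix (Fin 3) (Fin 3) k) : Set (F3 k) :=
  {quad k (M 0), quad k (M 1), quad k (M 2)}

lemma mem_Rsp (M : Fin 3 → Matrix (Fin 3) (Fin 3) k) (t : Fin 3) : M t ∈ Rsp k M :=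
  Submodule.subset_span ⟨t, rfl⟩

noncomputable def rho (M : Fin 3 → Matrix (Fin 3) (Fin 3) k) (rels : Set (F3 k))
    (hr : rels = tripleSet k M) :
    quotAlg k rels →ₐ[k] Module.End k (Amod k M) :=
  RingQuot.liftAlgHom k ⟨rho0 k M, by
    rintro a b ⟨ha, rfl⟩
    rw [map_zero]
    subst hr
    rcases ha with h | h | h <;> rw [h] <;>
      exact rho0_quad_zero k M _ (mem_Rsp k M _)⟩

lemma rho_gen (M : Fin 3 → Matrix (Fin 3) (Fin 3) k) (rels : Set (F3 k))
    (hr : rels = tripleSet k M) (i : Fin 3) :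
    rho k M rels hr (gen k rels i) = Lop k M (Pi.single i 1) := by
  rw [gen, rho, RingQuot.liftAlgHom_mkAlgHom_apply]
  simp [rho0, FreeAlgebra.lift_ι_apply]

lemma gen_indep (M : Fin 3 → Matrix (Fin 3) (Fin 3) k) (rels : Set (F3 k))
    (hr : rels = tripleSet k M) (t : Fin 3 → k)
    (h : ∑ i, t i • gen k rels i = 0) : t = 0 := by
  have h2 := congrArg (rho k M rels hr) h
  rw [map_sum, map_zero] at h2
  simp only [map_smul, rho_gen] at h2
  have hv : ∀ i : Fin 3, Matrix.vecMulVec (Pi.single i (1:k)) (0 : Fin 3 → k) = 0 := by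
    intro i; ext a b; simp [Matrix.vecMulVec_apply]
  have h4 : (∑ i, t i • Lop k M (Pi.single i 1)) ((1:k), 0, 0)
      = (0, (t : Fin 3 → k), 0) := by
    simp only [LinearMap.sum_apply, LinearMap.smul_apply]
    simp only [Lop, LinearMap.coe_mk, AddHom.coe_mk]
    refine Prod.ext ?_ (Prod.ext ?_ ?_)
    · simp [Prod.fst_sum, Prod.smul_mk]
    · simp only [Prod.snd_sum, Prod.fst_sum, Prod.smul_mk]
      funext j
      simp [Pi.single_apply, Finset.sum_ite_eq']
    · simp [Prod.snd_sum, Prod.smul_mk, hv]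
  rw [h2] at h4
  simpa using (congrArg (fun p : Amod k M => p.2.1) h4).symm

lemma quad_mem_rels (M : Fin 3 → Matrix (Fin 3) (Fin 3) k) (rels : Set (F3 k))
    (hr : rels = tripleSet k M) (t : Fin 3) : quad k (M t) ∈ rels := by
  subst hr
  fin_cases t
  · exact Set.mem_insert _ _
  · exact Set.mem_insert_iff.mpr (Or.inr (Set.mem_insert _ _))
  · exact Set.mem_insert_iff.mpr (Or.inr (Set.mem_insert_iff.mpr (Or.inr rfl)))

lemma mk_quadL (rels : Set (F3 k)) (c : Matrix (Fin 3) (Fin 3) k) :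
    RingQuot.mkAlgHom k (fun a b : F3 k => a ∈ rels ∧ b = 0) (quadL k c)
      = ∑ i, ∑ j, c i j • (gen k rels i * gen k rels j) := by
  simp [quadL, map_sum, map_smul, map_mul, gen]

/-- The key characterization: a quadratic expression in the generators vanishes
iff its coefficient matrix lies in the span of the relator matrices. -/
lemma key_iff (M : Fin 3 → Matrix (Fin 3) (Fin 3) k) (rels : Set (F3 k))
    (hr : rels = tripleSet k M) (c : Matrix (Fin 3) (Fin 3) k) :
    (∑ i, ∑ j, c i j • (gen k rels i * gen k rels j)) = 0 ↔ c ∈ Rsp k M := by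
  constructor
  · intro h
    have h2 := congrArg (rho k M rels hr) h
    rw [map_sum, map_zero] at h2
    simp only [map_sum, map_smul, map_mul, rho_gen, Module.End.mul_eq_comp] at h2
    have h3 : (∑ i, ∑ j, c i j •
        (Lop k M (Pi.single i 1) ∘ₗ Lop k M (Pi.single j 1))) ((1:k), 0, 0) = 0 := by
      rw [show (∑ i, ∑ j, c i j • (Lop k M (Pi.single i 1) ∘ₗ Lop k M (Pi.single j 1)))
          = 0 from h2]
      rfl
    rw [sumLop_apply] at h3
    have h4 := congrArg (fun p : Amod k M => p.2.2) h3
    simp only at h4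
    rw [← (Submodule.Quotient.mk_eq_zero (Rsp k M))]
    simpa [Submodule.mkQ_apply] using h4
  · intro hc
    obtain ⟨α, hα⟩ := (Submodule.mem_span_range_iff_exists_fun k).mp hc
    rw [← mk_quadL, ← hα, map_sum, map_sum]
    refine Finset.sum_eq_zero fun t _ => ?_
    have h5 : quadL k (α t • M t) = α t • quad k (M t) := by rw [map_smul, quad_eq]
    have h6 := RingQuot.mkAlgHom_rel k (s := fun a b : F3 k => a ∈ rels ∧ b = 0)
      (x := quad k (M t)) (y := 0) ⟨quad_mem_rels k M rels hr t, rfl⟩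
    rw [h5, map_smul, h6, map_zero, smul_zero]

lemma expand_quad {A : Type} [Ring A] [Algebra k A] (u : Fin 3 → A)
    (c g : Matrix (Fin 3) (Fin 3) k) :
    ∑ i, ∑ j, c i j • ((∑ a, g i a • u a) * (∑ b, g j b • u b))
      = ∑ a, ∑ b, (g.transpose * c * g) a b • (u a * u b) := by
  have e1 : ∀ i j : Fin 3, (∑ a, g i a • u a) * (∑ b, g j b • u b)
      = ∑ a, ∑ b, (g i a * g j b) • (u a * u b) := by
    intro i j
    rw [Finset.sum_mul]
    refine Finset.sum_congr rfl fun a _ => ?_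
    rw [Finset.mul_sum]
    exact Finset.sum_congr rfl fun b _ => smul_mul_smul_comm _ _ _ _
  simp only [e1]
  simp only [Matrix.mul_apply, Matrix.transpose_apply, Fin.sum_univ_three]
  match_scalars <;> ring

lemma iso_to_matrix (M N : Fin 3 → Matrix (Fin 3) (Fin 3) k) (r1 r2 : Set (F3 k))
    (h1 : r1 = tripleSet k M) (h2 : r2 = tripleSet k N)
    (hiso : GradedIso k r1 r2) :
    ∃ g gH : Matrix (Fin 3) (Fin 3) k, g * gH = 1 ∧
      ∀ t : Fin 3, g.transpose * (M t) * g ∈ Rsp k N := by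
  obtain ⟨φ, hφ⟩ := hiso
  have hgen1 : ∀ i, φ (gen k r1 i) ∈ genSpan k r2 := by
    intro i
    rw [← hφ]
    exact Submodule.mem_map_of_mem (Submodule.subset_span ⟨i, rfl⟩)
  choose g hg using fun i => (Submodule.mem_span_range_iff_exists_fun k).mp (hgen1 i)
  have hgen2 : ∀ j, φ.symm (gen k r2 j) ∈ genSpan k r1 := by
    intro j
    have hmem : gen k r2 j ∈ Submodule.map φ.toLinearMap (genSpan k r1) := by
      rw [hφ]; exact Submodule.subset_span ⟨j, rfl⟩
    obtain ⟨w, hw, hww⟩ := hmem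
    have heq : φ.symm (gen k r2 j) = w := by
      rw [← hww]; exact φ.symm_apply_apply w
    rwa [heq]
  choose gH hh using fun j => (Submodule.mem_span_range_iff_exists_fun k).mp (hgen2 j)
  refine ⟨Matrix.of g, Matrix.of gH, ?_, ?_⟩
  · -- g * gH = 1
    ext i l
    have e1 : gen k r1 i = ∑ l, (Matrix.of g * Matrix.of gH) i l • gen k r1 l := by
      calc gen k r1 i = φ.symm (φ (gen k r1 i)) := (φ.symm_apply_apply _).symm
        _ = φ.symm (∑ j, g i j • gen k r2 j) := by rw [hg i]
        _ = ∑ j, g i j • φ.symm (gen k r2 j) := by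
            rw [map_sum]
            exact Finset.sum_congr rfl fun j _ => map_smul _ _ _
        _ = ∑ j, g i j • ∑ l, gH j l • gen k r1 l := by
            exact Finset.sum_congr rfl fun j _ => by rw [hh j]
        _ = ∑ l, (Matrix.of g * Matrix.of gH) i l • gen k r1 l := by
            simp only [Finset.smul_sum, smul_smul, Matrix.mul_apply, Matrix.of_apply,
              Finset.sum_smul]
            rw [Finset.sum_comm]
    have e2 : ∑ l, ((Matrix.of g * Matrix.of gH) i l
        - (1 : Matrix (Fin 3) (Fin 3) k) i l) • gen k r1 l = 0 := by
      have hsplit : ∑ l, ((Matrix.of g * Matrix.of gH) i l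
          - (1 : Matrix (Fin 3) (Fin 3) k) i l) • gen k r1 l
          = (∑ l, (Matrix.of g * Matrix.of gH) i l • gen k r1 l)
            - ∑ l, (1 : Matrix (Fin 3) (Fin 3) k) i l • gen k r1 l := by
        rw [← Finset.sum_sub_distrib]
        exact Finset.sum_congr rfl fun l _ => by module
      rw [hsplit, ← e1]
      simp [Matrix.one_apply, ite_smul, Finset.sum_ite_eq']
    have e3 := congrFun (gen_indep k M r1 h1 _ e2) l
    simpa [sub_eq_zero] using e3
  · intro t
    have hrel : ∑ i, ∑ j, (M t) i j • (gen k r1 i * gen k r1 j) = 0 :=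
      (key_iff k M r1 h1 (M t)).mpr (mem_Rsp k M t)
    have h3 := congrArg φ hrel
    rw [map_sum, map_zero] at h3
    simp only [map_sum, map_smul, map_mul, ← hg] at h3
    have hexp := expand_quad k (gen k r2) (M t) (Matrix.of g)
    simp only [Matrix.of_apply] at hexp
    rw [hexp] at h3
    exact (key_iff k N r2 h2 _).mp h3

/-! ### The concrete relator matrices -/

def M1mat : Matrix (Fin 3) (Fin 3) k := !![0,1,0; -1,0,0; 0,0,0]
def M2mat : Matrix (Fin 3) (Fin 3) k := !![0,0,0; 0,0,0; 0,1,0]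
def M3q (q : k) : Matrix (Fin 3) (Fin 3) k := !![0,0,-1; 0,0,0; q,0,-1]
def M30 : Matrix (Fin 3) (Fin 3) k := !![0,0,0; 0,0,0; 1,0,-1]
def M31 : Matrix (Fin 3) (Fin 3) k := !![0,0,0; 0,0,-1; 1,0,-1]

def Mq (q : k) : Fin 3 → Matrix (Fin 3) (Fin 3) k := ![M1mat k, M2mat k, M3q k q]
def M0f : Fin 3 → Matrix (Fin 3) (Fin 3) k := ![M1mat k, M2mat k, M30 k]
def M1f : Fin 3 → Matrix (Fin 3) (Fin 3) k := ![M1mat k, M2mat k, M31 k]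

lemma quad_M1mat : quad k (M1mat k) = X k * Y k - Y k * X k := by
  simp [quad, Fin.sum_univ_three, M1mat, X, Y, Z, sub_eq_add_neg, Matrix.vecHead, Matrix.vecTail]

lemma quad_M2mat : quad k (M2mat k) = Z k * Y k := by
  simp [quad, Fin.sum_univ_three, M2mat, X, Y, Z, Matrix.vecHead, Matrix.vecTail]

lemma quad_M3q (q : k) : quad k (M3q k q) = q • (Z k * X k) - X k * Z k - Z k ^ 2 := by
  simp [quad, Fin.sum_univ_three, M3q, X, Y, Z, sq, sub_eq_add_neg, Matrix.vecHead, Matrix.vecTail]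
  abel

lemma quad_M30 : quad k (M30 k) = Z k * X k - Z k ^ 2 := by
  simp [quad, Fin.sum_univ_three, M30, X, Y, Z, sq, sub_eq_add_neg, Matrix.vecHead, Matrix.vecTail]

lemma quad_M31 : quad k (M31 k) = Z k * X k - Y k * Z k - Z k ^ 2 := by
  simp [quad, Fin.sum_univ_three, M31, X, Y, Z, sq, sub_eq_add_neg, Matrix.vecHead, Matrix.vecTail]
  abel

lemma Rrel_eq (q : k) : Rrel k q = tripleSet k (Mq k q) := by
  rw [Rrel, tripleSet]
  simp [Mq, quad_M1mat, quad_M2mat, quad_M3q]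

lemma R0rel_eq : R0rel k = tripleSet k (M0f k) := by
  rw [R0rel, tripleSet]
  simp [M0f, quad_M1mat, quad_M2mat, quad_M30]

lemma R1rel_eq : R1rel k = tripleSet k (M1f k) := by
  rw [R1rel, tripleSet]
  simp [M1f, quad_M1mat, quad_M2mat, quad_M31]

/-! ### Linear algebra helpers -/
open scoped Matrix

lemma row_indep (g gH : Matrix (Fin 3) (Fin 3) k) (hg : g * gH = 1)
    (μ : Fin 3 → k) (h : ∀ j, ∑ i, μ i * g i j = 0) : μ = 0 := by
  have h1 : μ ᵥ* g = 0 := by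
    funext j
    simpa [Matrix.vecMul, dotProduct] using h j
  calc μ = μ ᵥ* 1 := (Matrix.vecMul_one μ).symm
    _ = μ ᵥ* (g * gH) := by rw [hg]
    _ = (μ ᵥ* g) ᵥ* gH := (Matrix.vecMul_vecMul μ g gH).symm
    _ = (0 : Fin 3 → k) ᵥ* gH := by rw [h1]
    _ = 0 := Matrix.zero_vecMul gH

lemma col_indep (g gH : Matrix (Fin 3) (Fin 3) k) (hg : g * gH = 1)
    (ν : Fin 3 → k) (h : ∀ i, ∑ j, g i j * ν j = 0) : ν = 0 := by
  have hg' : gH * g = 1 := mul_eq_one_comm.mp hg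
  have h1 : g *ᵥ ν = 0 := by
    funext i
    simpa [Matrix.mulVec, dotProduct] using h i
  calc ν = 1 *ᵥ ν := (Matrix.one_mulVec ν).symm
    _ = (gH * g) *ᵥ ν := by rw [hg']
    _ = gH *ᵥ (g *ᵥ ν) := by rw [← Matrix.mulVec_mulVec]
    _ = gH *ᵥ (0 : Fin 3 → k) := by rw [h1]
    _ = 0 := Matrix.mulVec_zero gH

lemma entry_eq (Nf : Fin 3 → Matrix (Fin 3) (Fin 3) k) (C g : Matrix (Fin 3) (Fin 3) k)
    (h : g.transpose * C * g ∈ Rsp k Nf) :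
    ∃ α : Fin 3 → k, ∀ i j,
      (g.transpose * C * g) i j
        = α 0 * Nf 0 i j + α 1 * Nf 1 i j + α 2 * Nf 2 i j := by
  obtain ⟨α, hα⟩ := (Submodule.mem_span_range_iff_exists_fun k).mp h
  refine ⟨α, fun i j => ?_⟩
  have h2 := congrFun (congrFun hα i) j
  simp only [Matrix.sum_apply, Fin.sum_univ_three, Matrix.smul_apply, smul_eq_mul] at h2
  exact h2.symm

/-- Simp set for evaluating matrix entries. -/
lemma common_elim (N3 : Matrix (Fin 3) (Fin 3) k) (hN22 : N3 2 2 = -1)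
    (g gH : Matrix (Fin 3) (Fin 3) k) (hg : g * gH = 1)
    (hA : g.transpose * M1mat k * g ∈ Rsp k ![M1mat k, M2mat k, N3])
    (hB : g.transpose * M2mat k * g ∈ Rsp k ![M1mat k, M2mat k, N3]) :
    g 0 2 = 0 ∧ g 1 2 = 0 ∧ g 1 0 = 0 ∧ g 2 0 = 0 ∧ g 2 1 = 0 ∧
      g 0 0 ≠ 0 ∧ g 1 1 ≠ 0 ∧ g 2 2 ≠ 0 := by
  obtain ⟨α, hα⟩ := entry_eq k _ _ _ hA
  obtain ⟨β, hβ⟩ := entry_eq k _ _ _ hB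
  have hα22 := hα 2 2
  have hα12 := hα 1 2
  have hα02 := hα 0 2
  simp [Matrix.mul_apply, Matrix.transpose_apply, Fin.sum_univ_three, M1mat, M2mat,
    Matrix.vecHead, Matrix.vecTail] at hα22 hα12 hα02
  rw [hN22] at hα22
  have hα2 : α 2 = 0 := by linear_combination hα22
  have E1 : g 0 1 * g 1 2 - g 1 1 * g 0 2 = 0 := by
    linear_combination hα12 + N3 1 2 * hα2
  have E2 : g 0 0 * g 1 2 - g 1 0 * g 0 2 = 0 := by
    linear_combination hα02 + N3 0 2 * hα2
  have hμ := row_indep k g gH hg ![g 1 2, -(g 0 2), 0] ?_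
  swap
  · intro j
    fin_cases j
    · simp [Fin.sum_univ_three, Matrix.vecHead, Matrix.vecTail]
      try linear_combination E2
    · simp [Fin.sum_univ_three, Matrix.vecHead, Matrix.vecTail]
      try linear_combination E1
    · simp [Fin.sum_univ_three, Matrix.vecHead, Matrix.vecTail]
      try ring
  have h12 : g 1 2 = 0 := by simpa using congrFun hμ 0
  have h02 : g 0 2 = 0 := by
    have := congrFun hμ 1
    simp at this
    simpa [neg_eq_zero] using this
  have h22 : g 2 2 ≠ 0 := by
    intro h220
    have hν := col_indep k g gH hg ![0, 0, 1] ?_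
    · simpa using congrFun hν 2
    · intro i
      fin_cases i <;>
        simp [Fin.sum_univ_three, Matrix.vecHead, Matrix.vecTail, h12, h02, h220]
  have hβ22 := hβ 2 2
  have hβ20 := hβ 2 0
  have hβ10 := hβ 1 0
  have hβ01 := hβ 0 1
  have hβ11 := hβ 1 1
  simp [Matrix.mul_apply, Matrix.transpose_apply, Fin.sum_univ_three, M1mat, M2mat,
    Matrix.vecHead, Matrix.vecTail] at hβ22 hβ20 hβ10 hβ01 hβ11
  rw [hN22] at hβ22
  have hβ2 : β 2 = 0 := by linear_combination hβ22 - g 2 2 * h12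
  have h10 : g 1 0 = 0 := by
    have hprod : g 2 2 * g 1 0 = 0 := by
      linear_combination hβ20 + N3 2 0 * hβ2
    rcases mul_eq_zero.mp hprod with h | h
    · exact absurd h h22
    · exact h
  have hβ0 : β 0 = 0 := by
    linear_combination hβ10 - g 2 1 * h10 + N3 1 0 * hβ2
  have h11 : g 1 1 ≠ 0 := by
    intro h110
    have hμ2 := row_indep k g gH hg ![0, 1, 0] ?_
    · simpa using congrFun hμ2 1
    · intro j
      fin_cases j <;>
        simp [Fin.sum_univ_three, Matrix.vecHead, Matrix.vecTail, h10, h110, h12]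
  have h20 : g 2 0 = 0 := by
    have hprod : g 2 0 * g 1 1 = 0 := by
      linear_combination hβ01 + hβ0 + N3 0 1 * hβ2
    rcases mul_eq_zero.mp hprod with h | h
    · exact h
    · exact absurd h h11
  have h21 : g 2 1 = 0 := by
    have hprod : g 2 1 * g 1 1 = 0 := by
      linear_combination hβ11 + N3 1 1 * hβ2
    rcases mul_eq_zero.mp hprod with h | h
    · exact h
    · exact absurd h h11
  have h00 : g 0 0 ≠ 0 := by
    intro h000
    have hν := col_indep k g gH hg ![1, 0, 0] ?_
    · simpa using congrFun hν 0
    · intro i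
      fin_cases i <;>
        simp [Fin.sum_univ_three, Matrix.vecHead, Matrix.vecTail, h10, h20, h000]
  exact ⟨h02, h12, h10, h20, h21, h00, h11, h22⟩

lemma qq_eq (q q' : k) (h : GradedIso k (Rrel k q) (Rrel k q')) : q = q' := by
  obtain ⟨g, gH, hg, hmem⟩ := iso_to_matrix k (Mq k q) (Mq k q') _ _
    (Rrel_eq k q) (Rrel_eq k q') h
  have hA := hmem 0
  have hB := hmem 1
  have hC := hmem 2
  simp only [Mq, Matrix.cons_val_zero, Matrix.cons_val_one, Matrix.head_cons] at hA hB hC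
  obtain ⟨h02, h12, h10, h20, h21, h00, h11, h22⟩ :=
    common_elim k (M3q k q') (by simp [M3q, Matrix.vecHead, Matrix.vecTail]) g gH hg hA hB
  obtain ⟨γ, hγ⟩ := entry_eq k _ _ _ hC
  have hγ22 := hγ 2 2
  have hγ02 := hγ 0 2
  have hγ20 := hγ 2 0
  simp [Matrix.mul_apply, Matrix.transpose_apply, Fin.sum_univ_three, M1mat, M2mat, M3q,
    Matrix.vecHead, Matrix.vecTail] at hγ22 hγ02 hγ20
  have hγ2 : γ 2 = g 2 2 * g 2 2 := by
    linear_combination hγ22 + (g 2 2 - g 2 2 * q) * h02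
  have hE : g 0 0 = g 2 2 := by
    refine mul_right_cancel₀ h22 ?_
    linear_combination -hγ02 + hγ2 + (q * g 0 2 - g 2 2) * h20
  have e2 : (q - q') * (g 2 2 * g 2 2) = 0 := by
    linear_combination hγ20 + q' * hγ2 - q * g 2 2 * hE + g 2 0 * h02 + g 2 2 * h20
  rcases mul_eq_zero.mp e2 with h' | h'
  · exact sub_eq_zero.mp h'
  · exact absurd (mul_self_eq_zero.mp h') h22

lemma q_target_absurd (q : k) (N3 : Matrix (Fin 3) (Fin 3) k)
    (hN22 : N3 2 2 = -1) (hN02 : N3 0 2 = 0)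
    (g gH : Matrix (Fin 3) (Fin 3) k) (hg : g * gH = 1)
    (hA : g.transpose * M1mat k * g ∈ Rsp k ![M1mat k, M2mat k, N3])
    (hB : g.transpose * M2mat k * g ∈ Rsp k ![M1mat k, M2mat k, N3])
    (hC : g.transpose * M3q k q * g ∈ Rsp k ![M1mat k, M2mat k, N3]) : False := by
  obtain ⟨h02, h12, h10, h20, h21, h00, h11, h22⟩ :=
    common_elim k N3 hN22 g gH hg hA hB
  · obtain ⟨γ, hγ⟩ := entry_eq k _ _ _ hC
    have hγ02 := hγ 0 2
    simp [Matrix.mul_apply, Matrix.transpose_apply, Fin.sum_univ_three, M1mat, M2mat, M3q,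
      Matrix.vecHead, Matrix.vecTail, hN02] at hγ02
    have e : g 0 0 * g 2 2 = 0 := by
      linear_combination -hγ02 + (q * g 0 2 - g 2 2) * h20
    rcases mul_eq_zero.mp e with h' | h'
    · exact h00 h'
    · exact h22 h'

lemma r0_r1_absurd (g gH : Matrix (Fin 3) (Fin 3) k) (hg : g * gH = 1)
    (hA : g.transpose * M1mat k * g ∈ Rsp k ![M1mat k, M2mat k, M31 k])
    (hB : g.transpose * M2mat k * g ∈ Rsp k ![M1mat k, M2mat k, M31 k])
    (hC : g.transpose * M30 k * g ∈ Rsp k ![M1mat k, M2mat k, M31 k]) : False := by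
  obtain ⟨h02, h12, h10, h20, h21, h00, h11, h22⟩ :=
    common_elim k (M31 k) (by simp [M31, Matrix.vecHead, Matrix.vecTail]) g gH hg hA hB
  obtain ⟨γ, hγ⟩ := entry_eq k _ _ _ hC
  have hγ12 := hγ 1 2
  have hγ22 := hγ 2 2
  simp [Matrix.mul_apply, Matrix.transpose_apply, Fin.sum_univ_three, M1mat, M2mat, M30, M31,
    Matrix.vecHead, Matrix.vecTail] at hγ12 hγ22
  have hγ2 : γ 2 = 0 := by linear_combination hγ12 + (g 2 2 - g 0 2) * h21
  have e : g 2 2 * g 2 2 = 0 := by linear_combination -hγ22 + g 2 2 * h02 + hγ2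
  exact h22 (mul_self_eq_zero.mp e)

lemma gradedIso_refl (r : Set (F3 k)) : GradedIso k r r := by
  refine ⟨AlgEquiv.refl, ?_⟩
  have : (AlgEquiv.refl : quotAlg k r ≃ₐ[k] quotAlg k r).toLinearMap = LinearMap.id := rfl
  rw [this, Submodule.map_id]

lemma not_q_r0 (q : k) : ¬ GradedIso k (Rrel k q) (R0rel k) := by
  intro h
  obtain ⟨g, gH, hg, hmem⟩ := iso_to_matrix k (Mq k q) (M0f k) _ _
    (Rrel_eq k q) (R0rel_eq k) h
  have hA : g.transpose * M1mat k * g ∈ Rsp k ![M1mat k, M2mat k, M30 k] := hmem 0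
  have hB : g.transpose * M2mat k * g ∈ Rsp k ![M1mat k, M2mat k, M30 k] := hmem 1
  have hC : g.transpose * M3q k q * g ∈ Rsp k ![M1mat k, M2mat k, M30 k] := hmem 2
  exact q_target_absurd k q (M30 k) (by simp [M30, Matrix.vecHead, Matrix.vecTail])
    (by simp [M30]) g gH hg hA hB hC

lemma not_q_r1 (q : k) : ¬ GradedIso k (Rrel k q) (R1rel k) := by
  intro h
  obtain ⟨g, gH, hg, hmem⟩ := iso_to_matrix k (Mq k q) (M1f k) _ _
    (Rrel_eq k q) (R1rel_eq k) h
  have hA : g.transpose * M1mat k * g ∈ Rsp k ![M1mat k, M2mat k, M31 k] := hmem 0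
  have hB : g.transpose * M2mat k * g ∈ Rsp k ![M1mat k, M2mat k, M31 k] := hmem 1
  have hC : g.transpose * M3q k q * g ∈ Rsp k ![M1mat k, M2mat k, M31 k] := hmem 2
  exact q_target_absurd k q (M31 k) (by simp [M31, Matrix.vecHead, Matrix.vecTail])
    (by simp [M31]) g gH hg hA hB hC

lemma not_r0_r1 : ¬ GradedIso k (R0rel k) (R1rel k) := by
  intro h
  obtain ⟨g, gH, hg, hmem⟩ := iso_to_matrix k (M0f k) (M1f k) _ _
    (R0rel_eq k) (R1rel_eq k) h
  have hA : g.transpose * M1mat k * g ∈ Rsp k ![M1mat k, M2mat k, M31 k] := hmem 0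
  have hB : g.transpose * M2mat k * g ∈ Rsp k ![M1mat k, M2mat k, M31 k] := hmem 1
  have hC : g.transpose * M30 k * g ∈ Rsp k ![M1mat k, M2mat k, M31 k] := hmem 2
  exact r0_r1_absurd k g gH hg hA hB hC

theorem stmt5' (hchar : ringChar k ≠ 2) (q q' : k) :
    (GradedIso k (Rrel k q) (Rrel k q') ↔ q = q') ∧
    (∀ q : k, ¬ GradedIso k (Rrel k q) (R0rel k) ∧
      ¬ GradedIso k (Rrel k q) (R1rel k)) ∧
    ¬ GradedIso k (R0rel k) (R1rel k) := by
  refine ⟨⟨qq_eq k q q', ?_⟩, fun q => ⟨not_q_r0 k q, not_q_r1 k q⟩, not_r0_r1 k⟩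
  rintro rfl
  exact gradedIso_refl k _

end Aux

theorem stmt5 (k : Type) [Field k] [IsAlgClosed k] (hchar : ringChar k ≠ 2)
    (q q' : k) :
    (GradedIso k (Rrel k q) (Rrel k q') ↔ q = q') ∧
    (∀ q : k, ¬ GradedIso k (Rrel k q) (R0rel k) ∧
      ¬ GradedIso k (Rrel k q) (R1rel k)) ∧
    ¬ GradedIso k (R0rel k) (R1rel k) := by
  exact stmt5' k hchar q q'
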